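/- Let ψ be a unit speed curve in ℝ³ with κ > 0 whose principal normal makes a constant angle arccos(n) with a fixed unit vector d, 0 < |n| < 1. Then ⟨T, d⟩ = f·⟨B, d⟩ where f = τ/κ, and d = ±f·√((1-n²)/(1+f²))·T + n·N ± √((1-n²)/(1+f²))·B. -/
import Mathlib


open Real
open scoped RealInnerProductSpace

/-- For a slant helix with ⟨N, d⟩ = n (d a fixed unit vector,
0 < |n| < 1), one has ⟨T, d⟩ = f ⟨B, d⟩ with f = τ/κ, and
d = ε f √((1-n²)/(1+f²)) T + n N + ε √((1-n²)/(1+f²)) B for a sign ε = ±1. -/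
theorem slant_helix_axis_decomposition
    (ψ T N B : ℝ → EuclideanSpace ℝ (Fin 3)) (κ τ f : ℝ → ℝ)
    (d : EuclideanSpace ℝ (Fin 3)) (n : ℝ)
    (hκpos : ∀ s, 0 < κ s)
    (hψ : ∀ s, HasDerivAt ψ (T s) s)
    (hT : ∀ s, HasDerivAt T (κ s • N s) s)
    (hN : ∀ s, HasDerivAt N (-(κ s) • T s + τ s • B s) s)
    (hB : ∀ s, HasDerivAt B (-(τ s) • N s) s)
    (hTn : ∀ s, ‖T s‖ = 1) (hNn : ∀ s, ‖N s‖ = 1) (hBn : ∀ s, ‖B s‖ = 1)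
    (hTN : ∀ s, ⟪T s, N s⟫ = 0) (hTB : ∀ s, ⟪T s, B s⟫ = 0)
    (hNB : ∀ s, ⟪N s, B s⟫ = 0)
    (hd : ‖d‖ = 1) (hn0 : 0 < |n|) (hn1 : |n| < 1)
    (hangle : ∀ s, ⟪N s, d⟫ = n)
    (hf : f = fun s => τ s / κ s)
    (hκc : Continuous κ) (hτc : Continuous τ)
    (hBc : Continuous B) :
    (∀ s, ⟪T s, d⟫ = f s * ⟪B s, d⟫) ∧
    ∃ ε : ℝ, (ε = 1 ∨ ε = -1) ∧ ∀ s,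
      d = (ε * (f s * Real.sqrt ((1 - n ^ 2) / (1 + f s ^ 2)))) • T s + n • N s +
          (ε * Real.sqrt ((1 - n ^ 2) / (1 + f s ^ 2))) • B s := by
  have hn2 : n ^ 2 < 1 := by nlinarith [sq_abs n, abs_nonneg n]
  have hTT : ∀ s, ⟪T s, T s⟫ = 1 := fun s => by
    rw [real_inner_self_eq_norm_mul_norm, hTn s]; norm_num
  have hNN : ∀ s, ⟪N s, N s⟫ = 1 := fun s => by
    rw [real_inner_self_eq_norm_mul_norm, hNn s]; norm_num
  have hBB : ∀ s, ⟪B s, B s⟫ = 1 := fun s => by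
    rw [real_inner_self_eq_norm_mul_norm, hBn s]; norm_num
  have hNT : ∀ s, ⟪N s, T s⟫ = 0 := fun s => by rw [real_inner_comm]; exact hTN s
  have hBT : ∀ s, ⟪B s, T s⟫ = 0 := fun s => by rw [real_inner_comm]; exact hTB s
  have hBN : ∀ s, ⟪B s, N s⟫ = 0 := fun s => by rw [real_inner_comm]; exact hNB s
  -- key differential identity
  have key : ∀ s, κ s * ⟪T s, d⟫ = τ s * ⟪B s, d⟫ := by
    intro s
    have h1 : HasDerivAt (fun t => ⟪N t, d⟫)
        (⟪N s, (0 : EuclideanSpace ℝ (Fin 3))⟫ + ⟪-(κ s) • T s + τ s • B s, d⟫) s :=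
      HasDerivAt.inner ℝ (hN s) (hasDerivAt_const s d)
    have h2 : HasDerivAt (fun t => ⟪N t, d⟫) 0 s := by
      have : (fun t => ⟪N t, d⟫) = fun _ => n := funext hangle
      rw [this]; exact hasDerivAt_const s n
    have h3 := h1.unique h2
    simp only [inner_zero_right, zero_add, inner_add_left, real_inner_smul_left] at h3
    linarith
  have hFB : ∀ s, ⟪T s, d⟫ = f s * ⟪B s, d⟫ := by
    intro s
    have hk := (hκpos s).ne'
    rw [hf]
    rw [div_mul_eq_mul_div, eq_div_iff hk]
    linarith [key s]
  -- decomposition of d in the Frenet frame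
  have hdecomp : ∀ s, d = ⟪T s, d⟫ • T s + n • N s + ⟪B s, d⟫ • B s := by
    intro s
    set u : EuclideanSpace ℝ (Fin 3) := ⟪T s, d⟫ • T s + n • N s + ⟪B s, d⟫ • B s with hu
    set w : Fin 3 → EuclideanSpace ℝ (Fin 3) := ![T s, N s, B s] with hw
    have how : Orthonormal ℝ w := by
      constructor
      · intro i
        fin_cases i
        · exact hTn s
        · exact hNn s
        · exact hBn s
      · intro i j hij
        fin_cases i <;> fin_cases j <;>
          first
            | exact absurd rfl hij
            | exact hTN s | exact hTB s | exact hNB s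
            | exact hNT s | exact hBT s | exact hBN s
    have hspan : Submodule.span ℝ (Set.range w) = ⊤ :=
      how.linearIndependent.span_eq_top_of_card_eq_finrank (by simp)
    have h0 : ⟪T s, d - u⟫ = 0 := by
      simp only [hu, inner_sub_right, inner_add_right, real_inner_smul_right,
        hTT s, hTN s, hTB s]
      ring
    have h1 : ⟪N s, d - u⟫ = 0 := by
      simp only [hu, inner_sub_right, inner_add_right, real_inner_smul_right,
        hNN s, hNT s, hNB s, hangle s]
      ring
    have h2 : ⟪B s, d - u⟫ = 0 := by
      simp only [hu, inner_sub_right, inner_add_right, real_inner_smul_right,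
        hBB s, hBT s, hBN s]
      ring
    have hall : ∀ x, ⟪x, d - u⟫ = 0 := by
      intro x
      have hx : x ∈ Submodule.span ℝ (Set.range w) := hspan ▸ Submodule.mem_top
      induction hx using Submodule.span_induction with
      | mem y hy =>
        obtain ⟨i, rfl⟩ := hy
        fin_cases i
        · exact h0
        · exact h1
        · exact h2
      | zero => simp
      | add x y _ _ hx hy => rw [inner_add_left, hx, hy, add_zero]
      | smul c x _ hx => rw [real_inner_smul_left, hx, mul_zero]
    have : d - u = 0 := inner_self_eq_zero.mp (hall (d - u))
    exact (sub_eq_zero.mp this)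
  -- norm identity
  have hsum : ∀ s, ⟪T s, d⟫ ^ 2 + n ^ 2 + ⟪B s, d⟫ ^ 2 = 1 := by
    intro s
    have h1 : ⟪d, d⟫ = 1 := by
      rw [real_inner_self_eq_norm_mul_norm, hd]; norm_num
    nth_rewrite 1 [hdecomp s] at h1
    simp only [inner_add_left, real_inner_smul_left] at h1
    rw [hangle s] at h1
    nlinarith [h1]
  -- b² identity
  have hb2 : ∀ s, ⟪B s, d⟫ ^ 2 = (1 - n ^ 2) / (1 + f s ^ 2) := by
    intro s
    have h1 := hsum s
    have h2 := hFB s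
    have hpos : (0:ℝ) < 1 + f s ^ 2 := by positivity
    rw [eq_div_iff hpos.ne']
    have h3 : ⟪T s, d⟫ ^ 2 = f s ^ 2 * ⟪B s, d⟫ ^ 2 := by rw [h2]; ring
    linear_combination h1 - h3
  have hbne : ∀ s, ⟪B s, d⟫ ≠ 0 := by
    intro s hzero
    have := hb2 s
    rw [hzero] at this
    have hpos : (0:ℝ) < 1 + f s ^ 2 := by positivity
    have : (1 - n ^ 2) = 0 := by
      field_simp at this
      linarith [this]
    linarith
  have hbc : Continuous fun s => ⟪B s, d⟫ := hBc.inner continuous_const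
  -- sign constancy
  have hsign : ∀ s t, 0 < ⟪B s, d⟫ → 0 < ⟪B t, d⟫ ∨ ⟪B t, d⟫ < 0 → True := fun _ _ _ _ => trivial
  have hsame : ∀ s, (0 < ⟪B s, d⟫ ↔ 0 < ⟪B 0, d⟫) := by
    intro s
    constructor <;> intro h
    · by_contra hcon
      push_neg at hcon
      have hneg : ⟪B 0, d⟫ < 0 := lt_of_le_of_ne hcon (hbne 0)
      have : (0:ℝ) ∈ Set.uIcc ⟪B s, d⟫ ⟪B 0, d⟫ := by
        rw [Set.mem_uIcc]; right; exact ⟨hneg.le, h.le⟩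
      obtain ⟨x, _, hx⟩ := intermediate_value_uIcc (hbc.continuousOn (s := Set.uIcc s 0)) this
      exact hbne x hx
    · by_contra hcon
      push_neg at hcon
      have hneg : ⟪B s, d⟫ < 0 := lt_of_le_of_ne hcon (hbne s)
      have : (0:ℝ) ∈ Set.uIcc ⟪B 0, d⟫ ⟪B s, d⟫ := by
        rw [Set.mem_uIcc]; right; exact ⟨hneg.le, h.le⟩
      obtain ⟨x, _, hx⟩ := intermediate_value_uIcc (hbc.continuousOn (s := Set.uIcc 0 s)) this
      exact hbne x hx
  refine ⟨hFB, ?_⟩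
  refine ⟨if 0 < ⟪B 0, d⟫ then 1 else -1, by split <;> simp, ?_⟩
  intro s
  set ε : ℝ := if 0 < ⟪B 0, d⟫ then 1 else -1 with hε
  have habs : |⟪B s, d⟫| = Real.sqrt ((1 - n ^ 2) / (1 + f s ^ 2)) := by
    rw [← Real.sqrt_sq_eq_abs, hb2 s]
  have hbval : ⟪B s, d⟫ = ε * Real.sqrt ((1 - n ^ 2) / (1 + f s ^ 2)) := by
    rw [← habs, hε]
    by_cases h : 0 < ⟪B 0, d⟫
    · rw [if_pos h, one_mul, abs_of_pos ((hsame s).mpr h)]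
    · have hneg : ⟪B s, d⟫ < 0 := by
        have : ¬ 0 < ⟪B s, d⟫ := fun hc => h ((hsame s).mp hc)
        exact lt_of_le_of_ne (not_lt.mp this) (hbne s)
      rw [if_neg h, abs_of_neg hneg]; ring
  have htval : ⟪T s, d⟫ = ε * (f s * Real.sqrt ((1 - n ^ 2) / (1 + f s ^ 2))) := by
    rw [hFB s, hbval]; ring
  rw [← htval, ← hbval]
  exact hdecomp s
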